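/- Let α ∈ (1,2), let (ε_n)_{n≥1} be i.i.d. real random variables with symmetric distribution and P(ε_1 > x) = b0(x)·x^{−α} for x > 0, where b0 : (0,∞) → (0,∞) is slowly varying (b0(tx)/b0(t) → 1 as t → ∞ for every x > 0), and let b1 : [1,∞) → (0,∞) satisfy P(|ε_1| > t^{1/α}·b1(t)^{−1}) = t^{−1} for all t ≥ 1. Let η_n = c·n^{−ρ} with c > 0, ρ ∈ (0,1], and η_n ∈ (0,1) for all n, and define X̃_1 = 0 and X̃_{n+1} = (1 − η_n)·X̃_n + η_n^{1/α}·b1(η_n^{−1})·ε_n. Then the sequence (X̃_n)_{n≥1} is tight: for every δ > 0 there exists C > 0 such that P(|X̃_n| > C) ≤ δ for every n. -/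

import Mathlib

open MeasureTheory ProbabilityTheory Filter Topology Set

private lemma aux_exists_pow (L : ℝ) (hL : 1 ≤ L) :
    ∃ m : ℕ, (2:ℝ) ^ m ≤ L ∧ L ≤ 2 ^ (m+1) := by
  have hLpos : (0:ℝ) < L := lt_of_lt_of_le zero_lt_one hL
  refine ⟨⌊Real.logb 2 L⌋₊, ?_, ?_⟩
  · have h0 : (0:ℝ) ≤ Real.logb 2 L := Real.logb_nonneg one_lt_two hL
    calc (2:ℝ) ^ (⌊Real.logb 2 L⌋₊) = (2:ℝ) ^ ((⌊Real.logb 2 L⌋₊ : ℝ)) :=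
          (Real.rpow_natCast 2 _).symm
    _ ≤ (2:ℝ) ^ (Real.logb 2 L) :=
          Real.rpow_le_rpow_of_exponent_le one_le_two (Nat.floor_le h0)
    _ = L := Real.rpow_logb two_pos (by norm_num) hLpos
  · calc L = (2:ℝ) ^ (Real.logb 2 L) :=
          (Real.rpow_logb two_pos (by norm_num) hLpos).symm
    _ ≤ (2:ℝ) ^ ((⌊Real.logb 2 L⌋₊ : ℝ) + 1) :=
          Real.rpow_le_rpow_of_exponent_le one_le_two (Nat.lt_floor_add_one _).le
    _ = (2:ℝ) ^ (⌊Real.logb 2 L⌋₊ + 1) := by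
          rw [← Real.rpow_natCast 2 (⌊Real.logb 2 L⌋₊ + 1)]; push_cast; ring_nf

private lemma aux_potter_upper (T : ℝ → ℝ) (hanti : Antitone T) (hnn : ∀ x, 0 ≤ T x)
    (x₀ : ℝ) (hx₀ : 1 ≤ x₀) (hstep : ∀ s, x₀ ≤ s → T (2*s) ≤ (1/2) * T s) :
    ∀ x, x₀ ≤ x → ∀ L : ℝ, 1 ≤ L → T (L * x) ≤ 2 * L⁻¹ * T x := by
  intro x hx L hL
  have hx0 : (0:ℝ) < x := lt_of_lt_of_le zero_lt_one (le_trans hx₀ hx)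
  have hLpos : (0:ℝ) < L := lt_of_lt_of_le zero_lt_one hL
  have key : ∀ m : ℕ, T (2^m * x) ≤ (1/2:ℝ)^m * T x := by
    intro m
    induction m with
    | zero => simp
    | succ m ih =>
      have h1 : x₀ ≤ 2^m * x :=
        le_trans hx (le_mul_of_one_le_left hx0.le (one_le_pow₀ one_le_two))
      have h2 : T (2^(m+1) * x) = T (2 * (2^m * x)) := by ring_nf
      calc T (2^(m+1) * x) = T (2 * (2^m * x)) := h2
      _ ≤ (1/2) * T (2^m * x) := hstep _ h1
      _ ≤ (1/2) * ((1/2:ℝ)^m * T x) := by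
            have := mul_le_mul_of_nonneg_left ih (by norm_num : (0:ℝ) ≤ 1/2)
            linarith
      _ = (1/2:ℝ)^(m+1) * T x := by ring
  obtain ⟨m, h1, h2⟩ := aux_exists_pow L hL
  have hmono : T (L * x) ≤ T (2^m * x) :=
    hanti (mul_le_mul_of_nonneg_right h1 hx0.le)
  have hcoef : (1/2:ℝ)^m ≤ 2 * L⁻¹ := by
    have hp : (0:ℝ) < 2^m := by positivity
    have hL2 : L ≤ 2 * 2^m := by
      have h4 : (2:ℝ)^(m+1) = 2 * 2^m := by ring
      linarith [h2]
    have h5 : (2:ℝ) * L⁻¹ = 2 / L := by rw [div_eq_mul_inv]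
    rw [one_div, inv_pow, h5, le_div_iff₀ hLpos]
    calc (2^m:ℝ)⁻¹ * L ≤ (2^m:ℝ)⁻¹ * (2*2^m) :=
          mul_le_mul_of_nonneg_left hL2 (by positivity)
    _ = 2 := by field_simp
  calc T (L * x) ≤ T (2^m * x) := hmono
  _ ≤ (1/2:ℝ)^m * T x := key m
  _ ≤ (2 * L⁻¹) * T x := mul_le_mul_of_nonneg_right hcoef (hnn x)

private lemma aux_potter_lower (T : ℝ → ℝ) (hanti : Antitone T) (hnn : ∀ x, 0 ≤ T x)
    (x₀ : ℝ) (hx₀ : 1 ≤ x₀) (q : ℝ) (hq : 0 ≤ q)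
    (hstep : ∀ s, x₀ ≤ s → (2:ℝ)^(-q) * T s ≤ T (2*s)) :
    ∀ x, x₀ ≤ x → ∀ L : ℝ, 1 ≤ L → (2:ℝ)^(-q) * L^(-q) * T x ≤ T (L * x) := by
  intro x hx L hL
  have hx0 : (0:ℝ) < x := lt_of_lt_of_le zero_lt_one (le_trans hx₀ hx)
  have hLpos : (0:ℝ) < L := lt_of_lt_of_le zero_lt_one hL
  have key : ∀ m : ℕ, ((2:ℝ)^(-q))^m * T x ≤ T (2^m * x) := by
    intro m
    induction m with
    | zero => simp
    | succ m ih =>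
      have h1 : x₀ ≤ 2^m * x :=
        le_trans hx (le_mul_of_one_le_left hx0.le (one_le_pow₀ one_le_two))
      have h2 : T (2^(m+1) * x) = T (2 * (2^m * x)) := by ring_nf
      have h3 : (2:ℝ)^(-q) * (((2:ℝ)^(-q))^m * T x) ≤ (2:ℝ)^(-q) * T (2^m * x) :=
        mul_le_mul_of_nonneg_left ih (by positivity)
      calc ((2:ℝ)^(-q))^(m+1) * T x = (2:ℝ)^(-q) * (((2:ℝ)^(-q))^m * T x) := by ring
      _ ≤ (2:ℝ)^(-q) * T (2^m * x) := h3
      _ ≤ T (2 * (2^m * x)) := hstep _ h1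
      _ = T (2^(m+1) * x) := h2.symm
  obtain ⟨m, h1, h2⟩ := aux_exists_pow L hL
  have hmono : T (2^(m+1) * x) ≤ T (L * x) :=
    hanti (mul_le_mul_of_nonneg_right h2 hx0.le)
  have hcoef : (2:ℝ)^(-q) * L^(-q) ≤ ((2:ℝ)^(-q))^(m+1) := by
    have e1 : ((2:ℝ)^(-q))^(m+1) = (2:ℝ)^(-q) * ((2:ℝ)^(-q))^m := by ring
    have e2 : ((2:ℝ)^(-q))^m = ((2:ℝ)^m)^(-q) := by
      rw [← Real.rpow_natCast ((2:ℝ)^(-q)) m, ← Real.rpow_natCast (2:ℝ) m,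
        ← Real.rpow_mul (by norm_num : (0:ℝ) ≤ 2),
        ← Real.rpow_mul (by norm_num : (0:ℝ) ≤ 2)]
      ring_nf
    have e3 : L^(-q) ≤ ((2:ℝ)^m)^(-q) :=
      Real.rpow_le_rpow_of_nonpos (by positivity) h1 (by linarith)
    rw [e1, e2]
    exact mul_le_mul_of_nonneg_left e3 (by positivity)
  calc (2:ℝ)^(-q) * L^(-q) * T x ≤ ((2:ℝ)^(-q))^(m+1) * T x :=
        mul_le_mul_of_nonneg_right hcoef (hnn x)
  _ ≤ T (2^(m+1) * x) := key (m+1)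
  _ ≤ T (L * x) := hmono

private lemma aux_ptwise (u : ℝ) (hu : 0 < u) (J : ℕ) (y : ℝ) :
    (if |y| ≤ u then y^2 else 0) ≤
      (∑ j ∈ Finset.range (J+1),
        (u*(2⁻¹:ℝ)^j)^2 * (if u*(2⁻¹:ℝ)^(j+1) < |y| then 1 else 0))
      + (u*(2⁻¹:ℝ)^J)^2 := by
  have hterm : ∀ j ∈ Finset.range (J+1),
      (0:ℝ) ≤ (u*(2⁻¹:ℝ)^j)^2 * (if u*(2⁻¹:ℝ)^(j+1) < |y| then 1 else 0) := by
    intro j _; positivity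
  have hsum0 : (0:ℝ) ≤ ∑ j ∈ Finset.range (J+1),
      (u*(2⁻¹:ℝ)^j)^2 * (if u*(2⁻¹:ℝ)^(j+1) < |y| then 1 else 0) :=
    Finset.sum_nonneg hterm
  by_cases hy : |y| ≤ u
  · rw [if_pos hy]
    by_cases hsmall : |y| ≤ u*(2⁻¹:ℝ)^J
    · have : y^2 ≤ (u*(2⁻¹:ℝ)^J)^2 := by
        rw [← sq_abs y]
        exact pow_le_pow_left₀ (abs_nonneg y) hsmall 2
      linarith
    · set Q : ℕ → Prop := fun j => |y| ≤ u*(2⁻¹:ℝ)^j with hQ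
      have hQdec : DecidablePred Q := fun j => by rw [hQ]; infer_instance
      set k := Nat.findGreatest Q J with hk
      have hQ0 : Q 0 := by simpa [hQ] using hy
      have hspec : Q k := Nat.findGreatest_spec (Nat.zero_le J) hQ0
      have hkJ : k ≤ J := Nat.findGreatest_le J
      have hklt : k < J := by
        rcases lt_or_eq_of_le hkJ with h | h
        · exact h
        · exfalso; apply hsmall; rw [← h]; exact hspec
      have hnot : ¬ Q (k+1) :=
        Nat.findGreatest_is_greatest (Nat.lt_succ_self k) (by omega)
      have hgt : u*(2⁻¹:ℝ)^(k+1) < |y| := by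
        by_contra hcon
        exact hnot (le_of_not_gt hcon)
      have hy2 : y^2 ≤ (u*(2⁻¹:ℝ)^k)^2 := by
        rw [← sq_abs y]
        exact pow_le_pow_left₀ (abs_nonneg y) hspec 2
      have hmem : k ∈ Finset.range (J+1) := Finset.mem_range.mpr (by omega)
      have hsingle : (u*(2⁻¹:ℝ)^k)^2 * (if u*(2⁻¹:ℝ)^(k+1) < |y| then 1 else 0)
          ≤ ∑ j ∈ Finset.range (J+1),
            (u*(2⁻¹:ℝ)^j)^2 * (if u*(2⁻¹:ℝ)^(j+1) < |y| then 1 else 0) :=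
        Finset.single_le_sum hterm hmem
      rw [if_pos hgt, mul_one] at hsingle
      have h0 : (0:ℝ) ≤ (u*(2⁻¹:ℝ)^J)^2 := by positivity
      linarith
  · rw [if_neg hy]
    have h0 : (0:ℝ) ≤ (u*(2⁻¹:ℝ)^J)^2 := by positivity
    linarith

private lemma aux_karamata {Ω : Type*} [MeasurableSpace Ω] (μ : Measure Ω)
    [IsProbabilityMeasure μ] (f : Ω → ℝ) (hf : Measurable f)
    (T : ℝ → ℝ) (hTdef : ∀ v : ℝ, T v = (μ {ω | v < |f ω|}).toReal)
    (x₀ q : ℝ) (hx₀ : 1 ≤ x₀) (hq0 : 0 ≤ q) (hq2 : q < 2) (hTx₀ : 0 < T x₀)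
    (hP2 : ∀ x, x₀ ≤ x → ∀ L : ℝ, 1 ≤ L → (2:ℝ)^(-q) * L^(-q) * T x ≤ T (L*x)) :
    ∃ K : ℝ, 0 < K ∧ ∀ u, x₀ ≤ u →
      (∫ ω, (if |f ω| ≤ u then (f ω)^2 else 0) ∂μ) ≤ K * (u^2 * T u) := by
  have hTnn : ∀ v, 0 ≤ T v := fun v => by rw [hTdef]; exact ENNReal.toReal_nonneg
  have hT1 : ∀ v, T v ≤ 1 := fun v => by
    rw [hTdef]
    exact ENNReal.toReal_le_of_le_ofReal zero_le_one (by simpa using prob_le_one)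
  -- the uniform positive lower bound for u^2 * T u
  set m₀ : ℝ := (2:ℝ)^(-q) * x₀^2 * T x₀ with hm₀def
  have hm₀pos : 0 < m₀ := by
    have : (0:ℝ) < (2:ℝ)^(-q) := Real.rpow_pos_of_pos two_pos _
    have hx₀pos : (0:ℝ) < x₀ := lt_of_lt_of_le zero_lt_one hx₀
    positivity
  have hm₀ : ∀ u, x₀ ≤ u → m₀ ≤ u^2 * T u := by
    intro u hu
    have hx₀pos : (0:ℝ) < x₀ := lt_of_lt_of_le zero_lt_one hx₀
    have hupos : (0:ℝ) < u := lt_of_lt_of_le hx₀pos hu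
    have hL1 : (1:ℝ) ≤ u / x₀ := (one_le_div hx₀pos).mpr hu
    have h1 := hP2 x₀ le_rfl (u/x₀) hL1
    rw [div_mul_cancel₀ _ (ne_of_gt hx₀pos)] at h1
    -- h1 : 2^(-q) * (u/x₀)^(-q) * T x₀ ≤ T u
    have h2 : m₀ ≤ u^2 * ((2:ℝ)^(-q) * (u/x₀)^(-q) * T x₀) := by
      rw [hm₀def]
      have e1 : u^2 * ((2:ℝ)^(-q) * (u/x₀)^(-q) * T x₀)
          = (2:ℝ)^(-q) * (u^2 * (u/x₀)^(-q)) * T x₀ := by ring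
      rw [e1]
      have e2 : x₀^2 ≤ u^2 * (u/x₀)^(-q) := by
        have hdiv : (0:ℝ) < u / x₀ := by positivity
        have e3 : (u/x₀)^(-q) = (x₀/u)^q := by
          rw [Real.rpow_neg hdiv.le, ← Real.inv_rpow hdiv.le, inv_div]
        rw [e3]
        have e4 : (x₀/u)^(2:ℝ) ≤ (x₀/u)^q :=
          Real.rpow_le_rpow_of_exponent_ge (by positivity)
            ((div_le_one hupos).mpr hu) hq2.le
        have e5 : (x₀/u)^(2:ℝ) = x₀^2/u^2 := by
          rw [show ((2:ℝ)) = ((2:ℕ):ℝ) by norm_num, Real.rpow_natCast, div_pow]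
        calc x₀^2 = u^2 * (x₀^2/u^2) := by field_simp
        _ = u^2 * (x₀/u)^(2:ℝ) := by rw [e5]
        _ ≤ u^2 * (x₀/u)^q := by
              exact mul_le_mul_of_nonneg_left e4 (by positivity)
      have h2q : (0:ℝ) < (2:ℝ)^(-q) := Real.rpow_pos_of_pos two_pos _
      have h6 := mul_le_mul_of_nonneg_left e2 h2q.le
      exact mul_le_mul_of_nonneg_right h6 (hTnn x₀)
    calc m₀ ≤ u^2 * ((2:ℝ)^(-q) * (u/x₀)^(-q) * T x₀) := h2
    _ ≤ u^2 * T u := mul_le_mul_of_nonneg_left h1 (by positivity)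
  -- constants
  set r : ℝ := (2:ℝ)^(q-2) with hrdef
  have hr0 : 0 < r := Real.rpow_pos_of_pos two_pos _
  have hr1 : r < 1 := Real.rpow_lt_one_of_one_lt_of_neg one_lt_two (by linarith)
  have h1r : (0:ℝ) < 1 - r := by linarith
  have hx₀pos : (0:ℝ) < x₀ := lt_of_lt_of_le zero_lt_one hx₀
  refine ⟨(2:ℝ)^(2*q)/(1-r) + 8*x₀^2/m₀,
    add_pos (div_pos (Real.rpow_pos_of_pos two_pos _) h1r)
      (div_pos (by positivity) hm₀pos), ?_⟩
  intro u hu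
  have hupos : (0:ℝ) < u := lt_of_lt_of_le hx₀pos hu
  set J := ⌊Real.logb 2 (u/x₀)⌋₊ with hJdef
  have hdivpos : (0:ℝ) < u/x₀ := by positivity
  have hdiv1 : (1:ℝ) ≤ u/x₀ := (one_le_div hx₀pos).mpr hu
  have h2J : (2:ℝ)^J ≤ u/x₀ := by
    have h0 : (0:ℝ) ≤ Real.logb 2 (u/x₀) := Real.logb_nonneg one_lt_two hdiv1
    calc (2:ℝ) ^ J = (2:ℝ) ^ ((J:ℝ)) := (Real.rpow_natCast 2 _).symm
    _ ≤ (2:ℝ) ^ (Real.logb 2 (u/x₀)) :=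
          Real.rpow_le_rpow_of_exponent_le one_le_two (Nat.floor_le h0)
    _ = u/x₀ := Real.rpow_logb two_pos (by norm_num) hdivpos
  have h2J' : u/x₀ < (2:ℝ)^(J+1) := by
    calc u/x₀ = (2:ℝ) ^ (Real.logb 2 (u/x₀)) :=
          (Real.rpow_logb two_pos (by norm_num) hdivpos).symm
    _ < (2:ℝ) ^ ((J:ℝ) + 1) :=
          Real.rpow_lt_rpow_of_exponent_lt one_lt_two (Nat.lt_floor_add_one _)
    _ = (2:ℝ) ^ (J+1) := by
          rw [← Real.rpow_natCast 2 (J + 1)]; push_cast; ring_nf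
  have hdge : ∀ j:ℕ, j+1 ≤ J → x₀ ≤ u*(2⁻¹:ℝ)^(j+1) := by
    intro j hj
    have hpw : ((2:ℝ)⁻¹)^J ≤ ((2:ℝ)⁻¹)^(j+1) :=
      pow_le_pow_of_le_one (by norm_num) (by norm_num) hj
    have h2 : x₀ ≤ u * ((2:ℝ)⁻¹)^J := by
      have hx2 : x₀ * (2:ℝ)^J ≤ u := by
        have := mul_le_mul_of_nonneg_left h2J hx₀pos.le
        calc x₀ * (2:ℝ)^J ≤ x₀ * (u/x₀) := this
        _ = u := by field_simp
      rw [inv_pow, mul_comm u, inv_mul_eq_div, le_div_iff₀ (by positivity : (0:ℝ) < (2:ℝ)^J)]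
      exact hx2
    calc x₀ ≤ u*((2:ℝ)⁻¹)^J := h2
    _ ≤ u*((2:ℝ)⁻¹)^(j+1) := mul_le_mul_of_nonneg_left hpw hupos.le
  have hdJ : u*((2:ℝ)⁻¹)^J < 2*x₀ := by
    have : u < x₀ * (2:ℝ)^(J+1) := by
      have := mul_lt_mul_of_pos_left h2J' hx₀pos
      calc u = x₀ * (u/x₀) := by field_simp
      _ < x₀ * (2:ℝ)^(J+1) := this
    have hp : (0:ℝ) < (2:ℝ)^J := by positivity
    rw [inv_pow, mul_comm u, inv_mul_eq_div, div_lt_iff₀ hp]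
    calc u < x₀ * (2:ℝ)^(J+1) := this
    _ = 2*x₀*(2:ℝ)^J := by ring
  -- integral identities
  have hindmeas : ∀ v : ℝ, Measurable (fun ω => if v < |f ω| then (1:ℝ) else 0) :=
    fun v => Measurable.ite (measurableSet_lt measurable_const hf.abs)
      measurable_const measurable_const
  have hindint : ∀ v : ℝ, Integrable (fun ω => if v < |f ω| then (1:ℝ) else 0) μ := by
    intro v
    refine (integrable_const (1:ℝ)).mono' (hindmeas v).aestronglyMeasurable ?_
    filter_upwards with ω
    by_cases h : v < |f ω| <;> simp [h]
  have hindT : ∀ v : ℝ, (∫ ω, (if v < |f ω| then (1:ℝ) else 0) ∂μ) = T v := by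
    intro v
    have hset : MeasurableSet {ω | v < |f ω|} := measurableSet_lt measurable_const hf.abs
    have heq : (fun ω => if v < |f ω| then (1:ℝ) else 0)
        = Set.indicator {ω | v < |f ω|} (fun _ => (1:ℝ)) := by
      funext ω
      by_cases h : v < |f ω| <;> simp [Set.indicator_apply, h, Set.mem_setOf_eq]
    rw [heq, hTdef]
    exact integral_indicator_one hset
  set g : ℕ → Ω → ℝ :=
    fun j ω => (u*(2⁻¹:ℝ)^j)^2 * (if u*(2⁻¹:ℝ)^(j+1) < |f ω| then 1 else 0) with hgdef
  have hgint : ∀ j, Integrable (g j) μ := fun j => (hindint _).const_mul _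
  have hgval : ∀ j, (∫ ω, g j ω ∂μ) = (u*(2⁻¹:ℝ)^j)^2 * T (u*(2⁻¹:ℝ)^(j+1)) := by
    intro j
    rw [hgdef]
    simp only []
    rw [integral_const_mul, hindT]
  have hLmeas : Measurable (fun ω => if |f ω| ≤ u then (f ω)^2 else 0) :=
    Measurable.ite (measurableSet_le hf.abs measurable_const)
      (hf.pow_const 2) measurable_const
  have hLint : Integrable (fun ω => if |f ω| ≤ u then (f ω)^2 else 0) μ := by
    refine (integrable_const (u^2)).mono' hLmeas.aestronglyMeasurable ?_
    filter_upwards with ω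
    by_cases h : |f ω| ≤ u
    · rw [if_pos h]
      have : (f ω)^2 ≤ u^2 := by
        rw [← sq_abs]
        exact pow_le_pow_left₀ (abs_nonneg _) h 2
      rw [Real.norm_eq_abs, abs_of_nonneg (sq_nonneg _)]
      exact this
    · rw [if_neg h]; simp [sq_nonneg]
  have hRint : Integrable
      (fun ω => (∑ j ∈ Finset.range (J+1), g j ω) + (u*(2⁻¹:ℝ)^J)^2) μ :=
    (integrable_finset_sum _ (fun j _ => hgint j)).add (integrable_const _)
  have hmono : (∫ ω, (if |f ω| ≤ u then (f ω)^2 else 0) ∂μ)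
      ≤ ∫ ω, ((∑ j ∈ Finset.range (J+1), g j ω) + (u*(2⁻¹:ℝ)^J)^2) ∂μ := by
    refine integral_mono hLint hRint ?_
    intro ω
    exact aux_ptwise u hupos J (f ω)
  have hRval : (∫ ω, ((∑ j ∈ Finset.range (J+1), g j ω) + (u*(2⁻¹:ℝ)^J)^2) ∂μ)
      = (∑ j ∈ Finset.range (J+1), (u*(2⁻¹:ℝ)^j)^2 * T (u*(2⁻¹:ℝ)^(j+1)))
        + (u*(2⁻¹:ℝ)^J)^2 := by
    rw [integral_add (integrable_finset_sum _ (fun j _ => hgint j)) (integrable_const _),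
      integral_finset_sum _ (fun j _ => hgint j), integral_const]
    simp only [measure_univ, ENNReal.toReal_one, probReal_univ, smul_eq_mul, one_mul]
    congr 1
    exact Finset.sum_congr rfl (fun j _ => hgval j)
  -- per-term bound for j < J
  have hterm : ∀ j ∈ Finset.range J,
      (u*(2⁻¹:ℝ)^j)^2 * T (u*(2⁻¹:ℝ)^(j+1)) ≤ (2:ℝ)^(2*q) * r^j * (u^2 * T u) := by
    intro j hj
    have hjJ : j+1 ≤ J := Finset.mem_range.mp hj
    have hv : x₀ ≤ u*(2⁻¹:ℝ)^(j+1) := hdge j hjJ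
    have hL1 : (1:ℝ) ≤ (2:ℝ)^(j+1) := one_le_pow₀ one_le_two
    have h := hP2 _ hv ((2:ℝ)^(j+1)) hL1
    have he : (2:ℝ)^(j+1) * (u*(2⁻¹:ℝ)^(j+1)) = u := by
      rw [mul_comm u, ← mul_assoc, ← mul_pow]
      norm_num
    rw [he] at h
    -- h : 2^(-q) * ((2^(j+1))^(-q)) * T v ≤ T u
    have hA : (0:ℝ) < (2:ℝ)^(-q) * ((2:ℝ)^(j+1):ℝ)^(-q) := by
      have := Real.rpow_pos_of_pos (show (0:ℝ) < (2:ℝ)^(j+1) by positivity) (-q)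
      have h2 := Real.rpow_pos_of_pos two_pos (-q)
      positivity
    have hTv : T (u*(2⁻¹:ℝ)^(j+1))
        ≤ ((2:ℝ)^(-q) * ((2:ℝ)^(j+1):ℝ)^(-q))⁻¹ * T u := by
      rw [inv_mul_eq_div, le_div_iff₀ hA, mul_comm]
      exact h
    have hAinv : ((2:ℝ)^(-q) * ((2:ℝ)^(j+1):ℝ)^(-q))⁻¹
        = (2:ℝ)^q * ((2:ℝ)^(j+1):ℝ)^q := by
      rw [Real.rpow_neg (by norm_num : (0:ℝ) ≤ 2),
        Real.rpow_neg (by positivity : (0:ℝ) ≤ (2:ℝ)^(j+1))]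
      rw [mul_inv, inv_inv, inv_inv]
    have hkey : ((2⁻¹:ℝ)^j)^2 * ((2:ℝ)^q * ((2:ℝ)^(j+1):ℝ)^q) = (2:ℝ)^(2*q) * r^j := by
      have a1 : ((2⁻¹:ℝ)^j)^2 = (2:ℝ)^(-(2*(j:ℝ))) := by
        rw [← pow_mul, inv_pow, ← Real.rpow_natCast (2:ℝ) (j*2),
          ← Real.rpow_neg (by norm_num : (0:ℝ) ≤ 2)]
        push_cast; ring_nf
      have a2 : ((2:ℝ)^(j+1):ℝ)^q = (2:ℝ)^(((j:ℝ)+1)*q) := by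
        rw [← Real.rpow_natCast (2:ℝ) (j+1), ← Real.rpow_mul (by norm_num : (0:ℝ) ≤ 2)]
        push_cast; ring_nf
      have a3 : r^j = (2:ℝ)^((q-2)*(j:ℝ)) := by
        rw [hrdef, ← Real.rpow_natCast ((2:ℝ)^(q-2)) j,
          ← Real.rpow_mul (by norm_num : (0:ℝ) ≤ 2)]
      rw [a1, a2, a3, ← Real.rpow_add two_pos, ← Real.rpow_add two_pos,
        ← Real.rpow_add two_pos]
      congr 1
      ring
    calc (u*(2⁻¹:ℝ)^j)^2 * T (u*(2⁻¹:ℝ)^(j+1))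
        ≤ (u*(2⁻¹:ℝ)^j)^2 * (((2:ℝ)^(-q) * ((2:ℝ)^(j+1):ℝ)^(-q))⁻¹ * T u) :=
          mul_le_mul_of_nonneg_left hTv (by positivity)
    _ = ((2⁻¹:ℝ)^j)^2 * ((2:ℝ)^q * ((2:ℝ)^(j+1):ℝ)^q) * (u^2 * T u) := by
          rw [hAinv]; ring
    _ = (2:ℝ)^(2*q) * r^j * (u^2 * T u) := by rw [hkey]
  have hgeom : ∑ j ∈ Finset.range J, r^j ≤ 1/(1-r) := by
    have h := geom_sum_mul r J
    have hrJ : (0:ℝ) ≤ r^J := by positivity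
    rw [le_div_iff₀ h1r]
    nlinarith [h]
  have huT : (0:ℝ) ≤ u^2 * T u := mul_nonneg (by positivity) (hTnn u)
  have hsum1 : ∑ j ∈ Finset.range J, (u*(2⁻¹:ℝ)^j)^2 * T (u*(2⁻¹:ℝ)^(j+1))
      ≤ (2:ℝ)^(2*q)/(1-r) * (u^2 * T u) := by
    calc ∑ j ∈ Finset.range J, (u*(2⁻¹:ℝ)^j)^2 * T (u*(2⁻¹:ℝ)^(j+1))
        ≤ ∑ j ∈ Finset.range J, (2:ℝ)^(2*q) * r^j * (u^2 * T u) :=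
          Finset.sum_le_sum hterm
    _ = (2:ℝ)^(2*q) * (u^2 * T u) * (∑ j ∈ Finset.range J, r^j) := by
          rw [Finset.mul_sum]; exact Finset.sum_congr rfl (fun j _ => by ring)
    _ ≤ (2:ℝ)^(2*q) * (u^2 * T u) * (1/(1-r)) := by
          exact mul_le_mul_of_nonneg_left hgeom
            (mul_nonneg (Real.rpow_pos_of_pos two_pos _).le huT)
    _ = (2:ℝ)^(2*q)/(1-r) * (u^2 * T u) := by ring
  have hlast : (u*(2⁻¹:ℝ)^J)^2 * T (u*(2⁻¹:ℝ)^(J+1)) ≤ 4*x₀^2 := by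
    have h1 : (u*(2⁻¹:ℝ)^J)^2 ≤ (2*x₀)^2 := by
      have h0 : (0:ℝ) ≤ u*(2⁻¹:ℝ)^J := by positivity
      exact pow_le_pow_left₀ h0 hdJ.le 2
    calc (u*(2⁻¹:ℝ)^J)^2 * T (u*(2⁻¹:ℝ)^(J+1))
        ≤ (u*(2⁻¹:ℝ)^J)^2 * 1 := mul_le_mul_of_nonneg_left (hT1 _) (by positivity)
    _ = (u*(2⁻¹:ℝ)^J)^2 := by ring
    _ ≤ (2*x₀)^2 := h1
    _ = 4*x₀^2 := by ring
  have hrem : (u*(2⁻¹:ℝ)^J)^2 ≤ 4*x₀^2 := by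
    have h0 : (0:ℝ) ≤ u*(2⁻¹:ℝ)^J := by positivity
    calc (u*(2⁻¹:ℝ)^J)^2 ≤ (2*x₀)^2 := pow_le_pow_left₀ h0 hdJ.le 2
    _ = 4*x₀^2 := by ring
  have hfold : 8*x₀^2 ≤ 8*x₀^2/m₀ * (u^2 * T u) := by
    have := hm₀ u hu
    calc 8*x₀^2 = 8*x₀^2/m₀ * m₀ := by field_simp
    _ ≤ 8*x₀^2/m₀ * (u^2 * T u) := by
          exact mul_le_mul_of_nonneg_left this
            (div_nonneg (by positivity) hm₀pos.le)
  calc (∫ ω, (if |f ω| ≤ u then (f ω)^2 else 0) ∂μ)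
      ≤ (∑ j ∈ Finset.range (J+1), (u*(2⁻¹:ℝ)^j)^2 * T (u*(2⁻¹:ℝ)^(j+1)))
        + (u*(2⁻¹:ℝ)^J)^2 := by rw [← hRval]; exact hmono
  _ = ((∑ j ∈ Finset.range J, (u*(2⁻¹:ℝ)^j)^2 * T (u*(2⁻¹:ℝ)^(j+1)))
        + (u*(2⁻¹:ℝ)^J)^2 * T (u*(2⁻¹:ℝ)^(J+1))) + (u*(2⁻¹:ℝ)^J)^2 := by
        rw [Finset.sum_range_succ]
  _ ≤ ((2:ℝ)^(2*q)/(1-r) * (u^2 * T u) + 4*x₀^2) + 4*x₀^2 := by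
        have := add_le_add (add_le_add hsum1 hlast) hrem
        linarith
  _ = (2:ℝ)^(2*q)/(1-r) * (u^2 * T u) + 8*x₀^2 := by ring
  _ ≤ (2:ℝ)^(2*q)/(1-r) * (u^2 * T u) + 8*x₀^2/m₀ * (u^2 * T u) := by linarith [hfold]
  _ = ((2:ℝ)^(2*q)/(1-r) + 8*x₀^2/m₀) * (u^2 * T u) := by ring


private lemma aux_tel (η : ℕ → ℝ) : ∀ m : ℕ,
    (∑ k ∈ Finset.Icc 1 m, η k * ∏ j ∈ Finset.Icc (k+1) m, (1 - η j))
      = 1 - ∏ j ∈ Finset.Icc 1 m, (1 - η j) := by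
  intro m
  induction m with
  | zero => simp
  | succ m ih =>
    rw [Finset.sum_Icc_succ_top (by omega : 1 ≤ m+1)]
    have h1 : ∀ k ∈ Finset.Icc 1 m,
        η k * ∏ j ∈ Finset.Icc (k+1) (m+1), (1 - η j)
          = (η k * ∏ j ∈ Finset.Icc (k+1) m, (1 - η j)) * (1 - η (m+1)) := by
      intro k hk
      have hk' : k ≤ m := (Finset.mem_Icc.mp hk).2
      rw [Finset.prod_Icc_succ_top (by omega : k+1 ≤ m+1)]
      ring
    rw [Finset.sum_congr rfl h1, ← Finset.sum_mul, ih,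
      Finset.prod_Icc_succ_top (by omega : 1 ≤ m+1)]
    have : ∏ j ∈ Finset.Icc (m+1+1) (m+1), (1 - η j) = 1 := by
      rw [Finset.Icc_eq_empty (by omega)]; simp
    rw [this]
    ring

private lemma aux_rep {Ω : Type*} (η σ : ℕ → ℝ) (ε X : ℕ → Ω → ℝ)
    (hX1 : ∀ ω, X 1 ω = 0)
    (hXrec : ∀ n : ℕ, 1 ≤ n → ∀ ω, X (n+1) ω = (1 - η n) * X n ω + σ n * ε n ω) :
    ∀ m : ℕ, 1 ≤ m → ∀ ω, X (m+1) ω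
      = ∑ k ∈ Finset.Icc 1 m, (σ k * ∏ j ∈ Finset.Icc (k+1) m, (1 - η j)) * ε k ω := by
  intro m
  induction m with
  | zero => omega
  | succ m ih =>
    intro _ ω
    rcases Nat.eq_zero_or_pos m with hm | hm
    · subst hm
      rw [hXrec 1 le_rfl ω, hX1]
      have : Finset.Icc 2 1 = (∅ : Finset ℕ) := Finset.Icc_eq_empty (by omega)
      simp [this]
    · rw [hXrec (m+1) (by omega) ω, ih hm ω, Finset.sum_Icc_succ_top (by omega : 1 ≤ m+1)]
      have h1 : ∀ k ∈ Finset.Icc 1 m,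
          (σ k * ∏ j ∈ Finset.Icc (k+1) (m+1), (1 - η j)) * ε k ω
            = (1 - η (m+1)) * ((σ k * ∏ j ∈ Finset.Icc (k+1) m, (1 - η j)) * ε k ω) := by
        intro k hk
        have hk' : k ≤ m := (Finset.mem_Icc.mp hk).2
        rw [Finset.prod_Icc_succ_top (by omega : k+1 ≤ m+1)]
        ring
      rw [Finset.sum_congr rfl h1, ← Finset.mul_sum]
      have : ∏ j ∈ Finset.Icc (m+1+1) (m+1), (1 - η j) = 1 := by
        rw [Finset.Icc_eq_empty (by omega)]; simp
      rw [this]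
      ring
set_option maxHeartbeats 3200000 in
/-- the one-dimensional recursion
`X̃_{n+1} = (1-η_n) X̃_n + η_n^{1/α} b1(η_n^{-1}) ε_n`, driven by symmetric i.i.d.
regularly varying noise with `P(ε > x) = b0(x) x^{-α}` and
`P(|ε| > t^{1/α} b1(t)^{-1}) = t^{-1}`, is tight. -/
theorem symmetric_recursion_tight
    {Ω : Type*} [MeasurableSpace Ω] (P : Measure Ω) [IsProbabilityMeasure P]
    (α : ℝ) (hα : α ∈ Set.Ioo (1:ℝ) 2)
    (ε : ℕ → Ω → ℝ) (hmeas : ∀ n, Measurable (ε n))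
    (hindep : iIndepFun ε P)
    (hident : ∀ n : ℕ, IdentDistrib (ε n) (ε 1) P P)
    (hsymm : IdentDistrib (ε 1) (fun ω => -(ε 1 ω)) P P)
    (b0 : ℝ → ℝ) (hb0pos : ∀ x : ℝ, 0 < x → 0 < b0 x)
    (hb0slow : ∀ x : ℝ, 0 < x → Tendsto (fun s : ℝ => b0 (s * x) / b0 s) atTop (𝓝 1))
    (htail : ∀ x : ℝ, 0 < x → (P {ω | ε 1 ω > x}).toReal = b0 x * x ^ (-α))
    (b1 : ℝ → ℝ) (hb1pos : ∀ t : ℝ, 1 ≤ t → 0 < b1 t)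
    (hb1 : ∀ t : ℝ, 1 ≤ t → (P {ω | |ε 1 ω| > t ^ (1/α) * (b1 t)⁻¹}).toReal = t⁻¹)
    (c ρ : ℝ) (hc : 0 < c) (hρ : ρ ∈ Set.Ioc (0:ℝ) 1)
    (η : ℕ → ℝ) (hη : ∀ n : ℕ, η n = c * (n:ℝ) ^ (-ρ))
    (hη01 : ∀ n : ℕ, 1 ≤ n → η n ∈ Set.Ioo (0:ℝ) 1)
    (X : ℕ → Ω → ℝ) (hX1 : ∀ ω, X 1 ω = 0)
    (hXrec : ∀ n : ℕ, 1 ≤ n → ∀ ω,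
        X (n+1) ω = (1 - η n) * X n ω + η n ^ (1/α) * b1 ((η n)⁻¹) * ε n ω) :
    ∀ δ : ℝ, 0 < δ → ∃ C : ℝ, 0 < C ∧ ∀ n : ℕ, 1 ≤ n →
      (P {ω | |X n ω| > C}).toReal ≤ δ := by
  obtain ⟨hα1, hα2⟩ := hα
  obtain ⟨hρ0, hρ1⟩ := hρ
  set T : ℝ → ℝ := fun x => (P {ω | x < |ε 1 ω|}).toReal with hTdef
  have hTanti : Antitone T := by
    intro a b hab
    refine ENNReal.toReal_mono (measure_ne_top P _) (measure_mono ?_)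
    intro ω hω
    exact lt_of_le_of_lt hab hω
  have hTnn : ∀ v, 0 ≤ T v := fun v => ENNReal.toReal_nonneg
  have hT1 : ∀ v, T v ≤ 1 := fun v =>
    ENNReal.toReal_le_of_le_ofReal zero_le_one (by simpa using prob_le_one)
  have hTsym : ∀ x : ℝ, 0 < x → T x = 2 * (b0 x * x ^ (-α)) := by
    intro x hx
    have hunion : {ω | x < |ε 1 ω|} = {ω | ε 1 ω > x} ∪ {ω | ε 1 ω < -x} := by
      ext ω
      simp only [Set.mem_setOf_eq, Set.mem_union, gt_iff_lt, lt_abs, lt_neg]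
    have hdisj : Disjoint {ω | ε 1 ω > x} {ω | ε 1 ω < -x} := by
      rw [Set.disjoint_left]
      intro ω h1 h2
      simp only [Set.mem_setOf_eq] at h1 h2
      linarith
    have hneg : P {ω | ε 1 ω < -x} = P {ω | ε 1 ω > x} := by
      have h := hsymm.measure_mem_eq
        (s := {y : ℝ | y < -x}) (measurableSet_lt measurable_id measurable_const)
      have e1 : (ε 1) ⁻¹' {y : ℝ | y < -x} = {ω | ε 1 ω < -x} := rfl
      have e2 : (fun ω => -(ε 1 ω)) ⁻¹' {y : ℝ | y < -x} = {ω | ε 1 ω > x} := by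
        ext ω
        simp only [Set.mem_preimage, Set.mem_setOf_eq, gt_iff_lt, neg_lt_neg_iff]
      rw [e1, e2] at h
      exact h
    have hmeas2 : MeasurableSet {ω | ε 1 ω < -x} :=
      measurableSet_lt (hmeas 1) measurable_const
    have hmu := measure_union (μ := P) (hdisj) hmeas2
    rw [hTdef]
    simp only []
    rw [hunion, hmu, ENNReal.toReal_add (measure_ne_top P _) (measure_ne_top P _),
      hneg, htail x hx]
    ring
  have hTpos : ∀ x : ℝ, 0 < x → 0 < T x := by
    intro x hx
    rw [hTsym x hx]
    have h1 := hb0pos x hx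
    have h2 : (0:ℝ) < x ^ (-α) := Real.rpow_pos_of_pos hx _
    positivity
  have hTlim : Tendsto (fun s => T (2*s) / T s) atTop (𝓝 ((2:ℝ)^(-α))) := by
    have h2 := (hb0slow 2 two_pos).mul_const ((2:ℝ)^(-α))
    rw [one_mul] at h2
    refine Tendsto.congr' ?_ h2
    filter_upwards [eventually_gt_atTop (0:ℝ)] with s hs
    have h2s : (0:ℝ) < 2*s := by linarith
    rw [hTsym (2*s) h2s, hTsym s hs]
    have hmul : (2*s) ^ (-α) = 2^(-α) * s^(-α) := Real.mul_rpow (by norm_num) hs.le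
    have hb0s : b0 s ≠ 0 := ne_of_gt (hb0pos s hs)
    have hss : s ^ (-α) ≠ 0 := ne_of_gt (Real.rpow_pos_of_pos hs _)
    rw [hmul, mul_comm s 2]
    field_simp
  set q : ℝ := (α+2)/2 with hqdef
  have hqα : α < q := by rw [hqdef]; linarith
  have hq2 : q < 2 := by rw [hqdef]; linarith
  have hq0 : (0:ℝ) ≤ q := by rw [hqdef]; linarith
  have h2q : (2:ℝ)^(-q) < (2:ℝ)^(-α) :=
    Real.rpow_lt_rpow_of_exponent_lt one_lt_two (by linarith)
  have h2α : (2:ℝ)^(-α) < 1/2 := by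
    have h := Real.rpow_lt_rpow_of_exponent_lt one_lt_two (by linarith : -α < -1)
    rw [Real.rpow_neg_one] at h
    calc (2:ℝ)^(-α) < (2:ℝ)⁻¹ := h
    _ = 1/2 := by norm_num
  have hev : ∀ᶠ s in atTop, T (2*s)/T s ∈ Set.Ioo ((2:ℝ)^(-q)) (1/2) :=
    hTlim.eventually (Ioo_mem_nhds h2q h2α)
  obtain ⟨a, ha⟩ := eventually_atTop.mp (hev.and (eventually_ge_atTop (1:ℝ)))
  set x₀ : ℝ := max a 1 with hx₀def
  have hx₀1 : (1:ℝ) ≤ x₀ := le_max_right a 1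
  have hx₀pos : (0:ℝ) < x₀ := lt_of_lt_of_le zero_lt_one hx₀1
  have hstep : ∀ s, x₀ ≤ s → (T (2*s) ≤ 1/2 * T s ∧ (2:ℝ)^(-q) * T s ≤ T (2*s)) := by
    intro s hs
    obtain ⟨⟨hlo, hhi⟩, _⟩ := ha s (le_trans (le_max_left a 1) hs)
    have hs0 : (0:ℝ) < s := lt_of_lt_of_le hx₀pos hs
    have hTs : 0 < T s := hTpos s hs0
    constructor
    · exact le_of_lt ((div_lt_iff₀ hTs).mp hhi)
    · exact le_of_lt ((lt_div_iff₀ hTs).mp hlo)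
  have hP1 := aux_potter_upper T hTanti hTnn x₀ hx₀1 (fun s hs => (hstep s hs).1)
  have hP2 := aux_potter_lower T hTanti hTnn x₀ hx₀1 q hq0 (fun s hs => (hstep s hs).2)
  have hTx₀pos : 0 < T x₀ := hTpos _ hx₀pos
  obtain ⟨K₄, hK₄pos, hKar⟩ := aux_karamata P (ε 1) (hmeas 1) T (fun v => rfl)
    x₀ q hx₀1 hq0 hq2 hTx₀pos hP2
  -- the step-size coefficients
  set σ : ℕ → ℝ := fun k => η k ^ (1/α) * b1 ((η k)⁻¹) with hσdef
  have hηpos : ∀ k, 1 ≤ k → 0 < η k := fun k hk => (hη01 k hk).1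
  have hηlt1 : ∀ k, 1 ≤ k → η k < 1 := fun k hk => (hη01 k hk).2
  have hinv1 : ∀ k, 1 ≤ k → 1 ≤ (η k)⁻¹ :=
    fun k hk => (one_le_inv₀ (hηpos k hk)).mpr (hηlt1 k hk).le
  have hσpos : ∀ k, 1 ≤ k → 0 < σ k := by
    intro k hk
    exact mul_pos (Real.rpow_pos_of_pos (hηpos k hk) _) (hb1pos _ (hinv1 k hk))
  have hTσ : ∀ k, 1 ≤ k → T ((σ k)⁻¹) = η k := by
    intro k hk
    have ht := hb1 ((η k)⁻¹) (hinv1 k hk)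
    have harg : ((η k)⁻¹) ^ (1/α) * (b1 ((η k)⁻¹))⁻¹ = (σ k)⁻¹ := by
      rw [hσdef]
      simp only []
      rw [Real.inv_rpow (hηpos k hk).le, mul_inv]
    rw [harg, inv_inv] at ht
    exact ht
  have hσ1pos : 0 < σ 1 := hσpos 1 le_rfl
  have hu1pos : 0 < (σ 1)⁻¹ := by positivity
  have hσmono : ∀ k, 1 ≤ k → σ k ≤ σ 1 := by
    intro k hk
    rcases eq_or_lt_of_le hk with hk1 | hk2
    · rw [← hk1]
    · have hηk : η k < η 1 := by
        rw [hη k, hη 1]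
        simp only [Nat.cast_one, Real.one_rpow, mul_one]
        have h1k : (1:ℝ) < (k:ℝ) := by exact_mod_cast hk2
        have := Real.rpow_lt_one_of_one_lt_of_neg h1k (neg_lt_zero.mpr hρ0)
        nlinarith
      have huk : (σ 1)⁻¹ ≤ (σ k)⁻¹ := by
        by_contra hcon
        push_neg at hcon
        have := hTanti hcon.le
        rw [hTσ k hk, hTσ 1 le_rfl] at this
        linarith
      calc σ k = ((σ k)⁻¹)⁻¹ := (inv_inv _).symm
      _ ≤ ((σ 1)⁻¹)⁻¹ := by
            exact inv_anti₀ hu1pos huk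
      _ = σ 1 := inv_inv _
  -- counting constant
  set F : ℕ := ⌊(c / T x₀) ^ (1/ρ)⌋₊ with hFdef
  have hcount : ∀ k : ℕ, 1 ≤ k → T x₀ ≤ η k → k ≤ F := by
    intro k hk hTk
    rw [hη k] at hTk
    have hk0 : (0:ℝ) < (k:ℝ) := by exact_mod_cast hk
    have hkρ : (0:ℝ) < (k:ℝ)^ρ := Real.rpow_pos_of_pos hk0 _
    have h1 : (k:ℝ)^ρ * T x₀ ≤ c := by
      have he : (k:ℝ)^(-ρ) * (k:ℝ)^ρ = 1 := by
        rw [← Real.rpow_add hk0]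
        simp
      calc (k:ℝ)^ρ * T x₀ ≤ (k:ℝ)^ρ * (c * (k:ℝ)^(-ρ)) :=
            mul_le_mul_of_nonneg_left hTk hkρ.le
      _ = c * ((k:ℝ)^(-ρ) * (k:ℝ)^ρ) := by ring
      _ = c := by rw [he]; ring
    have h2 : (k:ℝ)^ρ ≤ c / T x₀ := by
      rw [le_div_iff₀ hTx₀pos]
      exact h1
    have h3 : (k:ℝ) ≤ (c / T x₀)^(1/ρ) := by
      have := Real.rpow_le_rpow hkρ.le h2 (by positivity : (0:ℝ) ≤ 1/ρ)
      rwa [← Real.rpow_mul hk0.le, mul_one_div, div_self (ne_of_gt hρ0),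
        Real.rpow_one] at this
    exact_mod_cast Nat.le_floor h3
  set K₅ : ℝ := 2 + (F:ℝ) * (2*x₀/((σ 1)⁻¹)) with hK₅def
  have hK₅pos : 0 < K₅ := by
    have : (0:ℝ) ≤ (F:ℝ) * (2*x₀/((σ 1)⁻¹)) := by positivity
    rw [hK₅def]; linarith
  set Ktot : ℝ := (1+K₄)*K₅ with hKtotdef
  have hKtotpos : 0 < Ktot := by
    rw [hKtotdef]; nlinarith
  intro δ hδ
  set C : ℝ := max (max 1 (x₀ * σ 1)) (Ktot/δ) with hCdef
  have hC1 : (1:ℝ) ≤ C := le_trans (le_max_left 1 (x₀ * σ 1)) (le_max_left _ _)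
  have hC0 : (0:ℝ) < C := lt_of_lt_of_le zero_lt_one hC1
  have hCx₀σ : x₀ * σ 1 ≤ C := le_trans (le_max_right 1 (x₀ * σ 1)) (le_max_left _ _)
  have hCδ : Ktot/δ ≤ C := le_max_right _ _
  have hfinal : Ktot / C ≤ δ := by
    rw [div_le_iff₀ hC0]
    have : Ktot ≤ δ * (Ktot/δ) := by field_simp; exact le_rfl
    calc Ktot ≤ δ * (Ktot/δ) := this
    _ ≤ δ * C := mul_le_mul_of_nonneg_left hCδ hδ.le
  refine ⟨C, hC0, ?_⟩
  intro n hn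
  rcases Nat.exists_eq_add_of_le hn with ⟨m, hm⟩
  rcases Nat.eq_zero_or_pos m with hm0 | hm1
  · subst hm0
    have he : {ω | |X n ω| > C} = (∅ : Set Ω) := by
      ext ω
      simp only [Set.mem_setOf_eq, Set.mem_empty_iff_false, iff_false, not_lt, gt_iff_lt]
      rw [show n = 1 by omega, hX1 ω, abs_zero]
      exact hC0.le
    rw [he]
    simp only [measure_empty, ENNReal.toReal_zero]
    exact hδ.le
  · -- main case : n = m + 1 with m ≥ 1
    have hmain : (P {ω | |X n ω| > C}).toReal ≤ Ktot / C := by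
      classical
      have hnm : n = m + 1 := by omega
      subst hnm
      set β : ℕ → ℝ := fun k => ∏ j ∈ Finset.Icc (k+1) m, (1 - η j) with hβdef
      have hβnn : ∀ k, 0 ≤ β k := by
        intro k
        apply Finset.prod_nonneg
        intro j hj
        have hj1 : 1 ≤ j := le_trans (by omega) (Finset.mem_Icc.mp hj).1
        linarith [hηlt1 j hj1]
      have hβle1 : ∀ k, β k ≤ 1 := by
        intro k
        apply Finset.prod_le_one
        · intro j hj
          have hj1 : 1 ≤ j := le_trans (by omega) (Finset.mem_Icc.mp hj).1
          linarith [hηlt1 j hj1]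
        · intro j hj
          have hj1 : 1 ≤ j := le_trans (by omega) (Finset.mem_Icc.mp hj).1
          linarith [hηpos j hj1]
      have hβpos : ∀ k, 0 < β k := by
        intro k
        apply Finset.prod_pos
        intro j hj
        have hj1 : 1 ≤ j := le_trans (by omega) (Finset.mem_Icc.mp hj).1
        linarith [hηlt1 j hj1]
      set w : ℕ → ℝ := fun k => σ k * β k with hwdef
      have hwpos : ∀ k, 1 ≤ k → 0 < w k := fun k hk => mul_pos (hσpos k hk) (hβpos k)
      have hwleσ1 : ∀ k, 1 ≤ k → w k ≤ σ 1 := by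
        intro k hk
        calc w k = σ k * β k := rfl
        _ ≤ σ k * 1 := mul_le_mul_of_nonneg_left (hβle1 k) (hσpos k hk).le
        _ = σ k := mul_one _
        _ ≤ σ 1 := hσmono k hk
      have hCwx₀ : ∀ k, 1 ≤ k → x₀ ≤ C / w k := by
        intro k hk
        have hwk := hwpos k hk
        have h1 : x₀ ≤ C / σ 1 := by
          rw [le_div_iff₀ hσ1pos]
          exact hCx₀σ
        have h2 : C / σ 1 ≤ C / w k := by
          rw [div_le_div_iff₀ hσ1pos hwk]
          exact mul_le_mul_of_nonneg_left (hwleσ1 k hk) hC0.le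
        linarith
      have hβtel : ∑ k ∈ Finset.Icc 1 m, η k * β k ≤ 1 := by
        have h := aux_tel η m
        have h0 : 0 ≤ ∏ j ∈ Finset.Icc 1 m, (1 - η j) := by
          apply Finset.prod_nonneg
          intro j hj
          have hj1 : 1 ≤ j := (Finset.mem_Icc.mp hj).1
          linarith [hηlt1 j hj1]
        calc ∑ k ∈ Finset.Icc 1 m, η k * β k
            = 1 - ∏ j ∈ Finset.Icc 1 m, (1 - η j) := h
        _ ≤ 1 := by linarith
      -- first sum bound
      have hS1term : ∀ k ∈ Finset.Icc 1 m, T (C / w k)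
          ≤ 2 * (η k * β k) / C + (if T x₀ ≤ η k then 2*x₀/(C*(σ 1)⁻¹) else 0) := by
        intro k hk
        obtain ⟨hk1, hkm⟩ := Finset.mem_Icc.mp hk
        have hwk : 0 < w k := hwpos k hk1
        have hβk : 0 < β k := hβpos k
        have hσk : 0 < σ k := hσpos k hk1
        rcases le_or_gt x₀ ((σ k)⁻¹) with hcase | hcase
        · have hL : 1 ≤ C / β k := by
            rw [le_div_iff₀ hβk, one_mul]
            linarith [hβle1 k, hC1]
          have h := hP1 ((σ k)⁻¹) hcase (C / β k) hL
          have harg : (C / β k) * (σ k)⁻¹ = C / w k := by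
            show (C / β k) * (σ k)⁻¹ = C / (σ k * β k)
            rw [div_eq_mul_inv, div_eq_mul_inv, mul_inv]
            ring
          rw [harg, hTσ k hk1] at h
          have he : 2 * (C / β k)⁻¹ * η k = 2 * (η k * β k) / C := by
            rw [inv_div]
            field_simp
          rw [he] at h
          have hif : (0:ℝ) ≤ (if T x₀ ≤ η k then 2*x₀/(C*(σ 1)⁻¹) else 0) := by
            split_ifs
            · positivity
            · exact le_rfl
          linarith
        · have hifT : T x₀ ≤ η k := by
            have h := hTanti hcase.le
            rw [hTσ k hk1] at h
            exact h
          rw [if_pos hifT]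
          have hmono2 : T (C / w k) ≤ T (C * (σ 1)⁻¹) := by
            apply hTanti
            rw [div_eq_mul_inv]
            have h1 : (σ 1)⁻¹ ≤ (w k)⁻¹ := inv_anti₀ hwk (hwleσ1 k hk1)
            exact mul_le_mul_of_nonneg_left h1 hC0.le
          have hL : 1 ≤ C * (σ 1)⁻¹ / x₀ := by
            rw [le_div_iff₀ hx₀pos, one_mul]
            have h1 : x₀ = x₀ * σ 1 * (σ 1)⁻¹ := by field_simp
            calc x₀ = x₀ * σ 1 * (σ 1)⁻¹ := h1
            _ ≤ C * (σ 1)⁻¹ := mul_le_mul_of_nonneg_right hCx₀σ hu1pos.le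
          have h := hP1 x₀ le_rfl (C * (σ 1)⁻¹ / x₀) hL
          have harg : (C * (σ 1)⁻¹ / x₀) * x₀ = C * (σ 1)⁻¹ :=
            div_mul_cancel₀ _ (ne_of_gt hx₀pos)
          rw [harg] at h
          have hb : 2 * (C * (σ 1)⁻¹ / x₀)⁻¹ * T x₀ ≤ 2*x₀/(C*(σ 1)⁻¹) := by
            rw [inv_div]
            have hpos : (0:ℝ) < C * (σ 1)⁻¹ := by positivity
            calc 2 * (x₀ / (C * (σ 1)⁻¹)) * T x₀
                ≤ 2 * (x₀ / (C * (σ 1)⁻¹)) * 1 := by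
                  refine mul_le_mul_of_nonneg_left (hT1 x₀) ?_
                  positivity
            _ = 2*x₀/(C*(σ 1)⁻¹) := by ring
          have hfirst : (0:ℝ) ≤ 2 * (η k * β k) / C := by
            have := (hηpos k hk1).le
            positivity
          linarith
      have hS1 : ∑ k ∈ Finset.Icc 1 m, T (C / w k) ≤ K₅ / C := by
        have h1 := Finset.sum_le_sum hS1term
        rw [Finset.sum_add_distrib] at h1
        have h2 : ∑ k ∈ Finset.Icc 1 m, 2 * (η k * β k) / C ≤ 2 / C := by
          rw [← Finset.sum_div]
          rw [div_le_div_iff₀ hC0 hC0]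
          have : ∑ k ∈ Finset.Icc 1 m, 2 * (η k * β k)
              = 2 * ∑ k ∈ Finset.Icc 1 m, η k * β k := by
            rw [Finset.mul_sum]
          rw [this]
          nlinarith [hβtel, hC0]
        have h3 : ∑ k ∈ Finset.Icc 1 m, (if T x₀ ≤ η k then 2*x₀/(C*(σ 1)⁻¹) else 0)
            ≤ (F:ℝ) * (2*x₀/(C*(σ 1)⁻¹)) := by
          rw [← Finset.sum_filter]
          rw [Finset.sum_const]
          have hsub : (Finset.Icc 1 m).filter (fun k => T x₀ ≤ η k) ⊆ Finset.Icc 1 F := by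
            intro k hkf
            obtain ⟨hkI, hkP⟩ := Finset.mem_filter.mp hkf
            obtain ⟨hk1, _⟩ := Finset.mem_Icc.mp hkI
            exact Finset.mem_Icc.mpr ⟨hk1, hcount k hk1 hkP⟩
          have hcard : ((Finset.Icc 1 m).filter (fun k => T x₀ ≤ η k)).card ≤ F := by
            have := Finset.card_le_card hsub
            rwa [Nat.card_Icc, Nat.add_sub_cancel] at this
          rw [nsmul_eq_mul]
          refine mul_le_mul_of_nonneg_right ?_ (by positivity)
          exact_mod_cast hcard
        have h4 : 2 / C + (F:ℝ) * (2*x₀/(C*(σ 1)⁻¹)) = K₅ / C := by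
          rw [hK₅def]
          field_simp
        linarith
      -- the truncated variables
      set φ : ℕ → ℝ → ℝ := fun k x => if |w k * x| ≤ C then w k * x else 0 with hφdef
      have hφmeas : ∀ k, Measurable (φ k) := by
        intro k
        exact Measurable.ite
          (measurableSet_le (measurable_id.const_mul (w k)).abs measurable_const)
          (measurable_id.const_mul (w k)) measurable_const
      set ζ : ℕ → Ω → ℝ := fun k => (φ k) ∘ (ε k) with hζdef
      have hζmeas : ∀ k, Measurable (ζ k) := fun k => (hφmeas k).comp (hmeas k)
      have hζbd : ∀ k, ∀ ω, |ζ k ω| ≤ C := by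
        intro k ω
        show |φ k (ε k ω)| ≤ C
        rw [hφdef]
        simp only []
        split_ifs with h
        · exact h
        · rw [abs_zero]; exact hC0.le
      have hζ2 : ∀ k, MemLp (ζ k) 2 P := by
        intro k
        refine MemLp.mono_exponent ?_ le_top
        exact memLp_top_of_bound (hζmeas k).aestronglyMeasurable C
          (Filter.Eventually.of_forall (fun ω => by
            rw [Real.norm_eq_abs]; exact hζbd k ω))
      have hζint : ∀ k, Integrable (ζ k) P := fun k => (hζ2 k).integrable one_le_two
      have hφodd : ∀ k, ∀ x : ℝ, φ k (-x) = - φ k x := by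
        intro k x
        rw [hφdef]
        simp only [mul_neg, abs_neg]
        split_ifs with h
        · ring
        · ring
      have hζmean : ∀ k, ∫ ω, ζ k ω ∂P = 0 := by
        intro k
        have h1 : ∫ ω, ζ k ω ∂P = ∫ ω, φ k (ε 1 ω) ∂P :=
          ((hident k).comp (hφmeas k)).integral_eq
        have h2 : ∫ ω, φ k (ε 1 ω) ∂P = ∫ ω, φ k (-(ε 1 ω)) ∂P :=
          (hsymm.comp (hφmeas k)).integral_eq
        have h3 : ∫ ω, φ k (-(ε 1 ω)) ∂P = - ∫ ω, φ k (ε 1 ω) ∂P := by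
          have he : (fun ω => φ k (-(ε 1 ω))) = fun ω => -(φ k (ε 1 ω)) := by
            funext ω; rw [hφodd]
          rw [he, integral_neg]
        rw [h1]
        linarith [h2, h3]
      set Y : Ω → ℝ := ∑ k ∈ Finset.Icc 1 m, ζ k with hYdef
      have hY2 : MemLp Y 2 P := memLp_finsetSum' _ (fun k _ => hζ2 k)
      have hYmean : ∫ ω, Y ω ∂P = 0 := by
        rw [hYdef]
        simp_rw [Finset.sum_apply]
        rw [integral_finset_sum _ (fun k _ => hζint k)]
        exact Finset.sum_eq_zero (fun k _ => hζmean k)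
      have hVar : variance Y P = ∑ k ∈ Finset.Icc 1 m, variance (ζ k) P := by
        rw [hYdef]
        refine IndepFun.variance_sum (fun k _ => hζ2 k) ?_
        intro i _ j _ hij
        exact (hindep.comp φ hφmeas).indepFun hij
      have hVark : ∀ k ∈ Finset.Icc 1 m, variance (ζ k) P ≤ K₄ * C^2 * T (C / w k) := by
        intro k hk
        obtain ⟨hk1, hkm⟩ := Finset.mem_Icc.mp hk
        have hwk : 0 < w k := hwpos k hk1
        have hu' : x₀ ≤ C / w k := hCwx₀ k hk1
        have h1 : variance (ζ k) P = ∫ ω, (ζ k ω)^2 ∂P := by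
          rw [variance_eq_sub (hζ2 k)]
          have he : P[(ζ k)^2] = ∫ ω, (ζ k ω)^2 ∂P := by
            apply integral_congr_ae
            filter_upwards with ω
            simp [Pi.pow_apply]
          rw [he, hζmean k]
          ring
        have h2 : ∫ ω, (ζ k ω)^2 ∂P = ∫ ω, (φ k (ε 1 ω))^2 ∂P := by
          have hid := ((hident k).comp (hφmeas k)).comp
            (measurable_id.pow_const 2)
          exact hid.integral_eq
        have h3 : ∀ x : ℝ, (φ k x)^2 = (w k)^2 * (if |x| ≤ C / w k then x^2 else 0) := by
          intro x
          have hcond : (|w k * x| ≤ C) ↔ (|x| ≤ C / w k) := by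
            rw [abs_mul, abs_of_pos hwk, ← le_div_iff₀' hwk]
          rw [hφdef]
          simp only []
          by_cases h : |w k * x| ≤ C
          · rw [if_pos h, if_pos (hcond.mp h)]; ring
          · rw [if_neg h, if_neg (fun hh => h (hcond.mpr hh))]; ring
        have h4 : ∫ ω, (φ k (ε 1 ω))^2 ∂P
            = (w k)^2 * ∫ ω, (if |ε 1 ω| ≤ C / w k then (ε 1 ω)^2 else 0) ∂P := by
          simp_rw [h3]
          rw [integral_const_mul]
        have h5 := hKar (C / w k) hu'
        have h6 : (w k)^2 * (K₄ * ((C/w k)^2 * T (C/w k))) = K₄ * C^2 * T (C/w k) := by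
          field_simp
        calc variance (ζ k) P = ∫ ω, (ζ k ω)^2 ∂P := h1
        _ = ∫ ω, (φ k (ε 1 ω))^2 ∂P := h2
        _ = (w k)^2 * ∫ ω, (if |ε 1 ω| ≤ C / w k then (ε 1 ω)^2 else 0) ∂P := h4
        _ ≤ (w k)^2 * (K₄ * ((C/w k)^2 * T (C/w k))) :=
              mul_le_mul_of_nonneg_left h5 (sq_nonneg _)
        _ = K₄ * C^2 * T (C/w k) := h6
      -- Chebyshev
      have hcheb := meas_ge_le_variance_div_sq (μ := P) hY2 hC0
      have hincl : {ω | |X (m+1) ω| > C}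
          ⊆ (⋃ k ∈ Finset.Icc 1 m, {ω | C < |w k * ε k ω|})
            ∪ {ω | C ≤ |Y ω - P[Y]|} := by
        intro ω hω
        simp only [Set.mem_setOf_eq, gt_iff_lt] at hω
        by_cases hall : ∀ k ∈ Finset.Icc 1 m, |w k * ε k ω| ≤ C
        · right
          have hXr : X (m+1) ω = ∑ k ∈ Finset.Icc 1 m, w k * ε k ω :=
            aux_rep η σ ε X hX1 (fun n' hn' ω' => hXrec n' hn' ω') m hm1 ω
          have hYω : Y ω = X (m+1) ω := by
            rw [hYdef, Finset.sum_apply, hXr]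
            apply Finset.sum_congr rfl
            intro k hk
            show φ k (ε k ω) = w k * ε k ω
            rw [hφdef]
            simp only []
            rw [if_pos (hall k hk)]
          simp only [Set.mem_setOf_eq]
          have hPY : P[Y] = (0:ℝ) := hYmean
          rw [hPY, sub_zero, hYω]
          exact hω.le
        · left
          push_neg at hall
          obtain ⟨k, hk, hgt⟩ := hall
          exact Set.mem_biUnion hk hgt
      have hAk : ∀ k ∈ Finset.Icc 1 m,
          (P {ω | C < |w k * ε k ω|}).toReal = T (C / w k) := by
        intro k hk
        obtain ⟨hk1, _⟩ := Finset.mem_Icc.mp hk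
        have hwk := hwpos k hk1
        have hseteq : {ω | C < |w k * ε k ω|} = (ε k) ⁻¹' {x : ℝ | C / w k < |x|} := by
          ext ω
          simp only [Set.mem_setOf_eq, Set.mem_preimage]
          rw [abs_mul, abs_of_pos hwk]
          exact (div_lt_iff₀' hwk).symm
        rw [hseteq, (hident k).measure_mem_eq
          (measurableSet_lt measurable_const continuous_abs.measurable)]
        rfl
      have hP' : P {ω | |X (m+1) ω| > C}
          ≤ P (⋃ k ∈ Finset.Icc 1 m, {ω | C < |w k * ε k ω|})
            + P {ω | C ≤ |Y ω - P[Y]|} :=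
        le_trans (measure_mono hincl) (measure_union_le _ _)
      have hPU : (P (⋃ k ∈ Finset.Icc 1 m, {ω | C < |w k * ε k ω|})).toReal
          ≤ ∑ k ∈ Finset.Icc 1 m, T (C / w k) := by
        have h1 := measure_biUnion_finset_le (μ := P) (Finset.Icc 1 m)
          (fun k => {ω | C < |w k * ε k ω|})
        calc (P (⋃ k ∈ Finset.Icc 1 m, {ω | C < |w k * ε k ω|})).toReal
            ≤ (∑ k ∈ Finset.Icc 1 m, P {ω | C < |w k * ε k ω|}).toReal := by
              refine ENNReal.toReal_mono ?_ h1
              exact ENNReal.sum_ne_top.mpr (fun k _ => measure_ne_top P _)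
        _ = ∑ k ∈ Finset.Icc 1 m, (P {ω | C < |w k * ε k ω|}).toReal :=
              ENNReal.toReal_sum (fun k _ => measure_ne_top P _)
        _ = ∑ k ∈ Finset.Icc 1 m, T (C / w k) := Finset.sum_congr rfl hAk
      have hPC : (P {ω | C ≤ |Y ω - P[Y]|}).toReal ≤ variance Y P / C^2 := by
        calc (P {ω | C ≤ |Y ω - P[Y]|}).toReal
            ≤ (ENNReal.ofReal (variance Y P / C^2)).toReal :=
              ENNReal.toReal_mono ENNReal.ofReal_ne_top hcheb
        _ = variance Y P / C^2 :=
              ENNReal.toReal_ofReal (div_nonneg (variance_nonneg _ _) (sq_nonneg _))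
      have hVtot : variance Y P / C^2 ≤ K₄ * ∑ k ∈ Finset.Icc 1 m, T (C / w k) := by
        rw [hVar]
        have h1 : ∑ k ∈ Finset.Icc 1 m, variance (ζ k) P
            ≤ K₄ * C^2 * ∑ k ∈ Finset.Icc 1 m, T (C / w k) := by
          rw [Finset.mul_sum]
          exact Finset.sum_le_sum hVark
        have hC2 : (0:ℝ) < C^2 := by positivity
        rw [div_le_iff₀ hC2]
        calc ∑ k ∈ Finset.Icc 1 m, variance (ζ k) P
            ≤ K₄ * C^2 * ∑ k ∈ Finset.Icc 1 m, T (C / w k) := h1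
        _ = K₄ * (∑ k ∈ Finset.Icc 1 m, T (C / w k)) * C^2 := by ring
      calc (P {ω | |X (m+1) ω| > C}).toReal
          ≤ (P (⋃ k ∈ Finset.Icc 1 m, {ω | C < |w k * ε k ω|})
              + P {ω | C ≤ |Y ω - P[Y]|}).toReal := by
            refine ENNReal.toReal_mono ?_ hP'
            exact ENNReal.add_ne_top.mpr ⟨measure_ne_top P _, measure_ne_top P _⟩
      _ = (P (⋃ k ∈ Finset.Icc 1 m, {ω | C < |w k * ε k ω|})).toReal
            + (P {ω | C ≤ |Y ω - P[Y]|}).toReal :=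
            ENNReal.toReal_add (measure_ne_top P _) (measure_ne_top P _)
      _ ≤ (∑ k ∈ Finset.Icc 1 m, T (C / w k))
            + K₄ * ∑ k ∈ Finset.Icc 1 m, T (C / w k) :=
            add_le_add hPU (le_trans hPC hVtot)
      _ = (1+K₄) * ∑ k ∈ Finset.Icc 1 m, T (C / w k) := by ring
      _ ≤ (1+K₄) * (K₅ / C) :=
            mul_le_mul_of_nonneg_left hS1 (by linarith)
      _ = Ktot / C := by rw [hKtotdef]; ring
    exact le_trans hmain hfinal
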